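/- arXiv:1501.02752 — 3 statements merged into one kernel-verified Lean document; each statement's English description precedes it below -/
import Mathlib

section
/- Let E be a finite-dimensional real normed vector space, let p ∈ E, and let φ, ψ : E → E be twice continuously differentiable maps with φ(p) = 0 and ψ(p) = 0. Suppose the Lie bracket of φ and ψ vanishes identically, i.e., for every x ∈ E, (Dψ)(x)(φ(x)) − (Dφ)(x)(ψ(x)) = 0, where Dφ(x) denotes the Fréchet derivative of φ at x. Then the linear maps Dφ(p) and Dψ(p) commute: Dφ(p) ∘ Dψ(p) = Dψ(p) ∘ Dφ(p). -/
/-- If two C² vector fields on a finite-dimensional real normed space have vanishing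
Lie bracket and both vanish at `p`, then their linearizations at `p` commute. -/
theorem commuting_vector_fields_linearizations_commute
    {E : Type*} [NormedAddCommGroup E] [NormedSpace ℝ E] [FiniteDimensional ℝ E]
    (p : E) (φ ψ : E → E) (hφ : ContDiff ℝ 2 φ) (hψ : ContDiff ℝ 2 ψ)
    (hφp : φ p = 0) (hψp : ψ p = 0)
    (hbracket : ∀ x : E, fderiv ℝ ψ x (φ x) - fderiv ℝ φ x (ψ x) = 0) :
    (fderiv ℝ φ p).comp (fderiv ℝ ψ p) = (fderiv ℝ ψ p).comp (fderiv ℝ φ p) := by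
  have hφ1 : ContDiff ℝ 1 (fderiv ℝ φ) := hφ.fderiv_right (by norm_num)
  have hψ1 : ContDiff ℝ 1 (fderiv ℝ ψ) := hψ.fderiv_right (by norm_num)
  have hcφ : HasFDerivAt (fderiv ℝ φ) (fderiv ℝ (fderiv ℝ φ) p) p :=
    ((hφ1.differentiable (by norm_num)) p).hasFDerivAt
  have hcψ : HasFDerivAt (fderiv ℝ ψ) (fderiv ℝ (fderiv ℝ ψ) p) p :=
    ((hψ1.differentiable (by norm_num)) p).hasFDerivAt
  have huφ : HasFDerivAt φ (fderiv ℝ φ p) p :=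
    ((hφ.differentiable (by norm_num)) p).hasFDerivAt
  have huψ : HasFDerivAt ψ (fderiv ℝ ψ p) p :=
    ((hψ.differentiable (by norm_num)) p).hasFDerivAt
  have hF : HasFDerivAt (fun x => fderiv ℝ ψ x (φ x))
      ((fderiv ℝ ψ p).comp (fderiv ℝ φ p)) p := by
    have := hcψ.clm_apply huφ
    simpa [hφp] using this
  have hG : HasFDerivAt (fun x => fderiv ℝ φ x (ψ x))
      ((fderiv ℝ φ p).comp (fderiv ℝ ψ p)) p := by
    have := hcφ.clm_apply huψ
    simpa [hψp] using this
  have heq : (fun x => fderiv ℝ ψ x (φ x)) = fun x => fderiv ℝ φ x (ψ x) :=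
    funext fun x => sub_eq_zero.mp (hbracket x)
  have hF' : HasFDerivAt (fun x => fderiv ℝ φ x (ψ x))
      ((fderiv ℝ ψ p).comp (fderiv ℝ φ p)) p := heq ▸ hF
  exact (hG.unique hF').symm ▸ rfl
end

section
/- Let L₁, …, L_m be pairwise commuting real antisymmetric n×n matrices (L_Λᵀ = −L_Λ and L_Λ L_Γ = L_Γ L_Λ for all Λ, Γ). Then there exist a natural number r with 2r ≤ n, vectors x₁, y₁, …, x_r, y_r in ℝⁿ forming an orthonormal family of 2r vectors, and real numbers λ_{Λα} (1 ≤ Λ ≤ m, 1 ≤ α ≤ r) such that L_Λ = Σ_{α=1}^{r} λ_{Λα} (y_α x_αᵀ − x_α y_αᵀ) for every Λ. Moreover, if the matrices L₁, …, L_m are linearly independent over ℝ, then the m rows of the matrix (λ_{Λα}) are linearly independent, and in particular m ≤ r ≤ ⌊n/2⌋. -/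
set_option maxHeartbeats 1000000

open Matrix Module LinearMap

section SNFAux

variable {n m : ℕ}

private lemma snf_inner_eq_dot (u v : EuclideanSpace ℝ (Fin n)) :
    (inner ℝ u v : ℝ) = WithLp.equiv 2 (Fin n → ℝ) u ⬝ᵥ WithLp.equiv 2 (Fin n → ℝ) v := by
  simp [PiLp.inner_apply, RCLike.inner_apply, dotProduct, mul_comm]

private lemma snf_exists_scalar
    (T : Fin m → (EuclideanSpace ℝ (Fin n) →ₗ[ℝ] EuclideanSpace ℝ (Fin n)))
    {W : Submodule ℝ (EuclideanSpace ℝ (Fin n))} (hWbot : W ≠ ⊥)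
    (hWinv : ∀ Λ, ∀ w ∈ W, T Λ w ∈ W)
    (hmin : ∀ U : Submodule ℝ (EuclideanSpace ℝ (Fin n)),
      U ≤ W → U ≠ ⊥ → (∀ Λ, ∀ u ∈ U, T Λ u ∈ U) → U = W)
    (S : EuclideanSpace ℝ (Fin n) →ₗ[ℝ] EuclideanSpace ℝ (Fin n))
    (hSsym : S.IsSymmetric) (hSW : ∀ w ∈ W, S w ∈ W)
    (hST : ∀ Λ v, S (T Λ v) = T Λ (S v)) :
    ∃ c : ℝ, ∀ w ∈ W, S w = c • w := by
  haveI : Nontrivial W := Submodule.nontrivial_iff_ne_bot.mpr hWbot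
  set S' : W →ₗ[ℝ] W := S.restrict hSW with hS'def
  have hS'sym : S'.IsSymmetric := by
    intro u v
    have := hSsym u v
    simpa [hS'def, LinearMap.restrict_apply, Submodule.coe_inner] using this
  obtain ⟨c, hc⟩ : ∃ c : ℝ, Module.End.HasEigenvalue S' c :=
    ⟨_, hS'sym.hasEigenvalue_iSup_of_finiteDimensional⟩
  refine ⟨c, ?_⟩
  set U : Submodule ℝ (EuclideanSpace ℝ (Fin n)) :=
    (Module.End.eigenspace S' c).map W.subtype with hU
  have hUmem : ∀ u, u ∈ U ↔ u ∈ W ∧ S u = c • u := by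
    intro u
    constructor
    · rintro ⟨w, hw, rfl⟩
      refine ⟨w.2, ?_⟩
      have h1 : S' w = c • w := Module.End.mem_eigenspace_iff.mp hw
      exact congrArg Subtype.val h1
    · rintro ⟨huW, hSu⟩
      refine ⟨⟨u, huW⟩, Module.End.mem_eigenspace_iff.mpr ?_, rfl⟩
      apply Subtype.ext
      simpa [hS'def, LinearMap.restrict_apply] using hSu
  have hUW : U ≤ W := Submodule.map_subtype_le _ _
  have hUbot : U ≠ ⊥ := by
    obtain ⟨v, hv⟩ := hc.exists_hasEigenvector
    have hvU : (v : EuclideanSpace ℝ (Fin n)) ∈ U := ⟨v, hv.1, rfl⟩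
    intro h
    rw [h, Submodule.mem_bot] at hvU
    exact hv.2 (Subtype.ext hvU)
  have hUinv : ∀ Λ, ∀ u ∈ U, T Λ u ∈ U := by
    intro Λ u hu
    obtain ⟨huW, hSu⟩ := (hUmem u).mp hu
    exact (hUmem _).mpr ⟨hWinv Λ u huW, by rw [hST, hSu, (T Λ).map_smul]⟩
  have hUeq := hmin U hUW hUbot hUinv
  intro w hw
  rw [← hUeq] at hw
  exact ((hUmem w).mp hw).2

end SNFAux

section BigAux

variable {n m : ℕ}

private lemma snf_aux
    (T : Fin m → (EuclideanSpace ℝ (Fin n) →ₗ[ℝ] EuclideanSpace ℝ (Fin n)))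
    (hskew : ∀ Λ (u v : EuclideanSpace ℝ (Fin n)), (inner ℝ (T Λ u) v : ℝ) = -inner ℝ u (T Λ v))
    (hcomm : ∀ Λ Γ v, T Λ (T Γ v) = T Γ (T Λ v)) :
    ∀ (d : ℕ) (V : Submodule ℝ (EuclideanSpace ℝ (Fin n))), Module.finrank ℝ V = d →
      (∀ Λ, ∀ v ∈ V, T Λ v ∈ V) →
      ∃ (r : ℕ) (x y : Fin r → EuclideanSpace ℝ (Fin n)) (μ : Fin m → Fin r → ℝ),
        2 * r ≤ d ∧ (∀ α, x α ∈ V) ∧ (∀ α, y α ∈ V) ∧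
        (∀ α β, (inner ℝ (x α) (x β) : ℝ) = if α = β then 1 else 0) ∧
        (∀ α β, (inner ℝ (y α) (y β) : ℝ) = if α = β then 1 else 0) ∧
        (∀ α β, (inner ℝ (x α) (y β) : ℝ) = 0) ∧
        (∀ Λ, ∀ v ∈ V, T Λ v =
          ∑ α, μ Λ α • ((inner ℝ (x α) v : ℝ) • y α - (inner ℝ (y α) v : ℝ) • x α)) := by
  intro d
  induction d using Nat.strong_induction_on with
  | _ d IH =>
  intro V hdim hVinv
  by_cases htriv : ∀ Λ, ∀ v ∈ V, T Λ v = 0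
  · refine ⟨0, finZeroElim, finZeroElim, fun _ => finZeroElim, by omega,
      fun α => α.elim0, fun α => α.elim0, fun α => α.elim0, fun α => α.elim0,
      fun α => α.elim0, ?_⟩
    intro Λ v hv
    simp [htriv Λ v hv]
  · push_neg at htriv
    obtain ⟨Λ₀, v₀, hv₀V, hv₀⟩ := htriv
    have hVbot : V ≠ ⊥ := by
      rintro rfl
      rw [Submodule.mem_bot] at hv₀V
      exact hv₀ (by rw [hv₀V, map_zero])
    classical
    -- find a minimal nonzero invariant subspace W ≤ V
    set P : Submodule ℝ (EuclideanSpace ℝ (Fin n)) → Prop :=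
      fun U => U ≠ ⊥ ∧ U ≤ V ∧ ∀ Λ, ∀ u ∈ U, T Λ u ∈ U with hP
    have hPV : P V := ⟨hVbot, le_rfl, hVinv⟩
    have hD : {k | ∃ U, P U ∧ Module.finrank ℝ U = k}.Nonempty := ⟨_, V, hPV, rfl⟩
    obtain ⟨W, hPW, hWrank⟩ :
        ∃ U, P U ∧ Module.finrank ℝ U = sInf {k | ∃ U, P U ∧ Module.finrank ℝ U = k} :=
      Nat.sInf_mem hD
    obtain ⟨hWbot, hWV, hWinv⟩ := hPW
    have hmin : ∀ U, U ≤ W → U ≠ ⊥ → (∀ Λ, ∀ u ∈ U, T Λ u ∈ U) → U = W := by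
      intro U hUW hUb hUinv
      refine Submodule.eq_of_le_of_finrank_le hUW ?_
      rw [hWrank]
      exact Nat.sInf_le ⟨U, ⟨hUb, hUW.trans hWV, hUinv⟩, rfl⟩
    -- the complementary invariant subspace
    set V' : Submodule ℝ (EuclideanSpace ℝ (Fin n)) := V ⊓ Wᗮ with hV'def
    have hV'inv : ∀ Λ, ∀ v ∈ V', T Λ v ∈ V' := by
      rintro Λ v hv
      obtain ⟨hvV, hvW⟩ := Submodule.mem_inf.mp hv
      refine Submodule.mem_inf.mpr ⟨hVinv Λ v hvV, ?_⟩
      rw [Submodule.mem_orthogonal]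
      intro w hw
      have h1 := hskew Λ w v
      have h2 : (inner ℝ (T Λ w) v : ℝ) = 0 := (Submodule.mem_orthogonal _ _).mp hvW _ (hWinv Λ w hw)
      rw [h2] at h1
      linarith [h1]
    have hproj_mem : ∀ v ∈ V, (↑(Submodule.orthogonalProjection W v) : EuclideanSpace ℝ (Fin n)) ∈ W ∧
        v - ↑(Submodule.orthogonalProjection W v) ∈ V' := by
      intro v hv
      have hp : (↑(Submodule.orthogonalProjection W v) : EuclideanSpace ℝ (Fin n)) ∈ W :=
        (Submodule.orthogonalProjection W v).2
      exact ⟨hp, Submodule.mem_inf.mpr ⟨V.sub_mem hv (hWV hp),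
        Submodule.sub_starProjection_mem_orthogonal (K := W) v⟩⟩
    have hrank_split : Module.finrank ℝ W + Module.finrank ℝ V' = d := by
      have h1 : W ⊔ V' = V := by
        refine le_antisymm (sup_le hWV inf_le_left) ?_
        intro v hv
        obtain ⟨hp, hv'⟩ := hproj_mem v hv
        have : v = ↑(Submodule.orthogonalProjection W v) + (v - ↑(Submodule.orthogonalProjection W v)) := by abel
        rw [this]
        exact Submodule.add_mem_sup hp hv'
      have h2 : W ⊓ V' = ⊥ := by
        refine le_bot_iff.mp ?_
        refine le_trans (le_trans (inf_le_inf_left W inf_le_right) ?_) (le_refl ⊥)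
        rw [Submodule.inf_orthogonal_eq_bot]
      have h3 := Submodule.finrank_sup_add_finrank_inf_eq W V'
      rw [h1, h2, hdim, finrank_bot, add_zero] at h3
      omega
    have hWpos : 0 < Module.finrank ℝ W := by
      exact Module.finrank_pos_iff.mpr (Submodule.nontrivial_iff_ne_bot.mpr hWbot)
    -- case split: does the family vanish on W?
    by_cases hWz : ∀ Λ, ∀ w ∈ W, T Λ w = 0
    · -- no new plane
      obtain ⟨r, x, y, μ, hr, hxV, hyV, hxx, hyy, hxy, hform⟩ :=
        IH (Module.finrank ℝ V') (by omega) V' rfl hV'inv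
      have hxW' : ∀ α, x α ∈ Wᗮ := fun α => (Submodule.mem_inf.mp (hxV α)).2
      have hyW' : ∀ α, y α ∈ Wᗮ := fun α => (Submodule.mem_inf.mp (hyV α)).2
      refine ⟨r, x, y, μ, by omega, fun α => (Submodule.mem_inf.mp (hxV α)).1,
        fun α => (Submodule.mem_inf.mp (hyV α)).1, hxx, hyy, hxy, ?_⟩
      intro Λ v hv
      obtain ⟨hp, hv'⟩ := hproj_mem v hv
      have hsplit : T Λ v = T Λ (v - ↑(Submodule.orthogonalProjection W v)) := by
        conv_lhs => rw [show v = ↑(Submodule.orthogonalProjection W v) +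
          (v - ↑(Submodule.orthogonalProjection W v)) by abel]
        rw [map_add, hWz Λ _ hp, zero_add]
      rw [hsplit, hform Λ _ hv']
      refine Finset.sum_congr rfl fun α _ => ?_
      have hxo : (inner ℝ (x α) (↑(Submodule.orthogonalProjection W v) : EuclideanSpace ℝ (Fin n)) : ℝ) = 0 :=
        (Submodule.mem_orthogonal' _ _).mp (hxW' α) _ hp
      have hyo : (inner ℝ (y α) (↑(Submodule.orthogonalProjection W v) : EuclideanSpace ℝ (Fin n)) : ℝ) = 0 :=
        (Submodule.mem_orthogonal' _ _).mp (hyW' α) _ hp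
      rw [inner_sub_right, inner_sub_right, hxo, hyo, sub_zero, sub_zero]
    · -- new plane
      push_neg at hWz
      obtain ⟨Λ₁, w₁, hw₁W, hw₁⟩ := hWz
      -- T Λ₁ ∘ T Λ₁ is a negative scalar c₁ on W
      obtain ⟨c₁, hc₁⟩ := snf_exists_scalar T hWbot hWinv hmin ((T Λ₁) ∘ₗ (T Λ₁))
        (by intro u v; simp [LinearMap.comp_apply, hskew])
        (fun w hw => hWinv Λ₁ _ (hWinv Λ₁ w hw))
        (by
          intro Γ v
          simp only [LinearMap.comp_apply]
          rw [hcomm Λ₁ Γ v, hcomm Λ₁ Γ (T Λ₁ v)])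
      have hT2 : ∀ w ∈ W, T Λ₁ (T Λ₁ w) = c₁ • w := fun w hw => hc₁ w hw
      have hTT : ∀ w ∈ W, (inner ℝ (T Λ₁ w) (T Λ₁ w) : ℝ) = -c₁ * inner ℝ w w := by
        intro w hw
        have h1 := hskew Λ₁ w (T Λ₁ w)
        rw [hT2 w hw, real_inner_smul_right] at h1
        rw [real_inner_comm] at h1
        linarith [h1]
      have hc₁neg : c₁ < 0 := by
        have h1 := hTT w₁ hw₁W
        have h2 : (0:ℝ) < inner ℝ (T Λ₁ w₁) (T Λ₁ w₁) := by
          have hne : (inner ℝ (T Λ₁ w₁) (T Λ₁ w₁) : ℝ) ≠ 0 := inner_self_ne_zero.mpr hw₁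
          have hnn : (0:ℝ) ≤ inner ℝ (T Λ₁ w₁) (T Λ₁ w₁) := real_inner_self_nonneg
          exact lt_of_le_of_ne hnn (Ne.symm hne)
        have h3 : (0:ℝ) ≤ inner ℝ w₁ w₁ := real_inner_self_nonneg
        nlinarith
      set s : ℝ := Real.sqrt (-c₁) with hs
      have hs_pos : 0 < s := Real.sqrt_pos.mpr (by linarith)
      have hs_sq : s * s = -c₁ := Real.mul_self_sqrt (by linarith)
      have hw₁ne : w₁ ≠ 0 := by rintro rfl; exact hw₁ (map_zero _)
      have hnw₁ : (0:ℝ) < inner ℝ w₁ w₁ := by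
        have hne : (inner ℝ w₁ w₁ : ℝ) ≠ 0 := inner_self_ne_zero.mpr hw₁ne
        exact lt_of_le_of_ne real_inner_self_nonneg (Ne.symm hne)
      set nw : ℝ := Real.sqrt (inner ℝ w₁ w₁) with hnw
      have hnw_pos : 0 < nw := Real.sqrt_pos.mpr hnw₁
      have hnw_sq : nw * nw = inner ℝ w₁ w₁ := Real.mul_self_sqrt (le_of_lt hnw₁)
      obtain ⟨x, hxdef⟩ : ∃ x : EuclideanSpace ℝ (Fin n), x = nw⁻¹ • w₁ := ⟨_, rfl⟩
      obtain ⟨y, hydef⟩ : ∃ y : EuclideanSpace ℝ (Fin n), y = s⁻¹ • T Λ₁ x := ⟨_, rfl⟩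
      have hxW : x ∈ W := by rw [hxdef]; exact W.smul_mem _ hw₁W
      have hyW : y ∈ W := by rw [hydef]; exact W.smul_mem _ (hWinv Λ₁ x hxW)
      have hxx1 : (inner ℝ x x : ℝ) = 1 := by
        rw [hxdef, real_inner_smul_left, real_inner_smul_right, ← hnw_sq]
        field_simp
      have hTx : T Λ₁ x = s • y := by
        rw [hydef, smul_smul, mul_inv_cancel₀ (ne_of_gt hs_pos), one_smul]
      have hTy : T Λ₁ y = (-s) • x := by
        rw [hydef, (T Λ₁).map_smul, hT2 x hxW, smul_smul]
        congr 1
        have : c₁ = -(s * s) := by linarith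
        rw [this]
        field_simp
      have hyy1 : (inner ℝ y y : ℝ) = 1 := by
        rw [hydef, real_inner_smul_left, real_inner_smul_right, hTT x hxW, hxx1]
        rw [← hs_sq]
        field_simp
      have hxy0 : (inner ℝ x y : ℝ) = 0 := by
        rw [hydef, real_inner_smul_right]
        have h1 := hskew Λ₁ x x
        have h2 : (inner ℝ x (T Λ₁ x) : ℝ) = 0 := by
          rw [real_inner_comm] at h1; linarith
        rw [h2, mul_zero]
      have hyx0 : (inner ℝ y x : ℝ) = 0 := by rw [real_inner_comm]; exact hxy0
      -- every `T Γ` acts on the plane of `x, y` as a rotation generator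
      have key : ∀ Γ, ∃ μ : ℝ, T Γ x = μ • y ∧ T Γ y = (-μ) • x := by
        intro Γ
        obtain ⟨dΓ, hdΓ⟩ := snf_exists_scalar T hWbot hWinv hmin
          ((T Γ) ∘ₗ (T Λ₁) + (T Λ₁) ∘ₗ (T Γ))
          (by
            intro u v
            simp only [LinearMap.add_apply, LinearMap.comp_apply, inner_add_left, inner_add_right,
              hskew]
            ring)
          (fun w hw => Submodule.add_mem _ (hWinv Γ _ (hWinv Λ₁ w hw)) (hWinv Λ₁ _ (hWinv Γ w hw)))
          (by
            intro Δ v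
            simp only [LinearMap.add_apply, LinearMap.comp_apply]
            rw [hcomm Λ₁ Δ v, hcomm Γ Δ (T Λ₁ v), hcomm Γ Δ v, hcomm Λ₁ Δ (T Γ v)]
            exact ((T Δ).map_add _ _).symm)
        have hanti : ∀ w ∈ W, T Λ₁ (T Γ w) + T Λ₁ (T Γ w) = dΓ • w := by
          intro w hw
          have h0 := hdΓ w hw
          simp only [LinearMap.add_apply, LinearMap.comp_apply] at h0
          rw [hcomm Γ Λ₁ w] at h0
          exact h0
        have hinj : ∀ u ∈ W, T Λ₁ u = 0 → u = 0 := by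
          intro u huW hu
          have h0 := hT2 u huW
          rw [hu, map_zero] at h0
          rcases smul_eq_zero.mp h0.symm with h | h
          · exact absurd h (ne_of_lt hc₁neg)
          · exact h
        have hTΓ : ∀ w ∈ W, T Γ w = (dΓ / (2 * c₁)) • T Λ₁ w := by
          intro w hw
          have hmem : T Γ w - (dΓ / (2 * c₁)) • T Λ₁ w ∈ W :=
            W.sub_mem (hWinv Γ w hw) (W.smul_mem _ (hWinv Λ₁ w hw))
          have h3 : T Λ₁ (T Γ w - (dΓ / (2 * c₁)) • T Λ₁ w) = 0 := by
            rw [map_sub, (T Λ₁).map_smul, hT2 w hw]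
            have h4 := hanti w hw
            have h5 : T Λ₁ (T Γ w) = (dΓ / 2) • w := by
              have h6 : (2:ℝ) • T Λ₁ (T Γ w) = dΓ • w := by rw [two_smul]; exact h4
              calc T Λ₁ (T Γ w) = (2:ℝ)⁻¹ • ((2:ℝ) • T Λ₁ (T Γ w)) := by
                    rw [smul_smul]; norm_num
                _ = (2:ℝ)⁻¹ • (dΓ • w) := by rw [h6]
                _ = (dΓ / 2) • w := by rw [smul_smul]; congr 1; ring
            rw [h5, smul_smul]
            have h7 : dΓ / (2 * c₁) * c₁ = dΓ / 2 := by
              have hc₁ne : c₁ ≠ 0 := ne_of_lt hc₁neg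
              field_simp
            rw [h7, sub_self]
          exact sub_eq_zero.mp (hinj _ hmem h3)
        refine ⟨dΓ / (2 * c₁) * s, ?_, ?_⟩
        · rw [hTΓ x hxW, hTx, smul_smul]
        · rw [hTΓ y hyW, hTy, smul_smul]
          congr 1
          ring
      choose μ₀ hμ₀x hμ₀y using key
      have hxne : x ≠ 0 := by
        intro h
        rw [h, inner_zero_left] at hxx1
        norm_num at hxx1
      -- W is exactly the plane spanned by x and y
      have hspan : Submodule.span ℝ {x, y} = W := by
        apply hmin
        · rw [Submodule.span_le]
          intro z hz
          simp only [Set.mem_insert_iff, Set.mem_singleton_iff] at hz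
          rcases hz with rfl | rfl
          · exact hxW
          · exact hyW
        · intro h
          have hx' : x ∈ Submodule.span ℝ {x, y} := Submodule.subset_span (Set.mem_insert _ _)
          rw [h, Submodule.mem_bot] at hx'
          exact hxne hx'
        · intro Λ u hu
          have hmap : Submodule.map (T Λ) (Submodule.span ℝ {x, y}) ≤ Submodule.span ℝ {x, y} := by
            rw [Submodule.map_span, Submodule.span_le]
            rintro z ⟨w, hw, rfl⟩
            simp only [Set.mem_insert_iff, Set.mem_singleton_iff] at hw
            rcases hw with rfl | rfl
            · rw [hμ₀x]
              exact Submodule.smul_mem _ _ (Submodule.subset_span (by simp))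
            · rw [hμ₀y]
              exact Submodule.smul_mem _ _ (Submodule.subset_span (by simp))
          exact hmap ⟨u, hu, rfl⟩
      have hproj : ∀ w ∈ W, w = (inner ℝ x w : ℝ) • x + (inner ℝ y w : ℝ) • y := by
        intro w hw
        rw [← hspan] at hw
        obtain ⟨a, b, rfl⟩ := Submodule.mem_span_pair.mp hw
        have hxw : (inner ℝ x (a • x + b • y) : ℝ) = a := by
          rw [inner_add_right, real_inner_smul_right, real_inner_smul_right, hxx1, hxy0]
          ring
        have hyw : (inner ℝ y (a • x + b • y) : ℝ) = b := by
          rw [inner_add_right, real_inner_smul_right, real_inner_smul_right, hyx0, hyy1]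
          ring
        rw [hxw, hyw]
      have hTW : ∀ Λ, ∀ w ∈ W, T Λ w = μ₀ Λ • ((inner ℝ x w : ℝ) • y - (inner ℝ y w : ℝ) • x) := by
        intro Λ w hw
        have e1 : T Λ ((inner ℝ x w : ℝ) • x) = (inner ℝ x w : ℝ) • (μ₀ Λ • y) := by
          rw [(T Λ).map_smul, hμ₀x]
        have e2 : T Λ ((inner ℝ y w : ℝ) • y) = (inner ℝ y w : ℝ) • ((-μ₀ Λ) • x) := by
          rw [(T Λ).map_smul, hμ₀y]
        conv_lhs => rw [hproj w hw, (T Λ).map_add, e1, e2]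
        module
      have hW2 : 2 ≤ Module.finrank ℝ W := by
        have hon : Orthonormal ℝ (![x, y]) := by
          rw [orthonormal_iff_ite]
          intro i j
          fin_cases i <;> fin_cases j <;>
            simp [hxx1, hyy1, hxy0, hyx0, (by rw [norm_eq_sqrt_real_inner, hxx1]; simp : ‖x‖ = 1),
              (by rw [norm_eq_sqrt_real_inner, hyy1]; simp : ‖y‖ = 1)]
        have hli : LinearIndependent ℝ (![x, y]) := hon.linearIndependent
        have hcompeq : W.subtype ∘ ![(⟨x, hxW⟩ : W), ⟨y, hyW⟩] = ![x, y] := by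
          funext i; fin_cases i <;> rfl
        have hliW : LinearIndependent ℝ (![(⟨x, hxW⟩ : W), ⟨y, hyW⟩]) :=
          LinearIndependent.of_comp W.subtype (by rw [hcompeq]; exact hli)
        simpa using hliW.fintype_card_le_finrank
      -- recurse on the orthogonal complement
      obtain ⟨r, x', y', μ', hr, hx'V, hy'V, hxx', hyy', hxy', hform'⟩ :=
        IH (Module.finrank ℝ V') (by omega) V' rfl hV'inv
      have hx'W : ∀ α, x' α ∈ Wᗮ := fun α => (Submodule.mem_inf.mp (hx'V α)).2
      have hy'W : ∀ α, y' α ∈ Wᗮ := fun α => (Submodule.mem_inf.mp (hy'V α)).2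
      have hxx'0 : ∀ β, (inner ℝ x (x' β) : ℝ) = 0 :=
        fun β => (Submodule.mem_orthogonal _ _).mp (hx'W β) x hxW
      have hxy'0 : ∀ β, (inner ℝ x (y' β) : ℝ) = 0 :=
        fun β => (Submodule.mem_orthogonal _ _).mp (hy'W β) x hxW
      have hyx'0 : ∀ β, (inner ℝ y (x' β) : ℝ) = 0 :=
        fun β => (Submodule.mem_orthogonal _ _).mp (hx'W β) y hyW
      have hyy'0 : ∀ β, (inner ℝ y (y' β) : ℝ) = 0 :=
        fun β => (Submodule.mem_orthogonal _ _).mp (hy'W β) y hyW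
      refine ⟨r + 1, Fin.cons x x', Fin.cons y y', fun Λ => Fin.cons (μ₀ Λ) (μ' Λ),
        by omega, ?_, ?_, ?_, ?_, ?_, ?_⟩
      · intro α
        refine Fin.cases ?_ (fun α' => ?_) α
        · simpa using hWV hxW
        · simpa using (Submodule.mem_inf.mp (hx'V α')).1
      · intro α
        refine Fin.cases ?_ (fun α' => ?_) α
        · simpa using hWV hyW
        · simpa using (Submodule.mem_inf.mp (hy'V α')).1
      · intro α β
        refine Fin.cases ?_ (fun α' => ?_) α <;> refine Fin.cases ?_ (fun β' => ?_) β
        · simp only [Fin.cons_zero, if_pos rfl]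
          exact hxx1
        · simp only [Fin.cons_zero, Fin.cons_succ]
          rw [if_neg (Ne.symm (Fin.succ_ne_zero β'))]
          exact hxx'0 β'
        · simp only [Fin.cons_zero, Fin.cons_succ]
          rw [if_neg (Fin.succ_ne_zero α'), real_inner_comm]
          exact hxx'0 α'
        · simpa using hxx' α' β'
      · intro α β
        refine Fin.cases ?_ (fun α' => ?_) α <;> refine Fin.cases ?_ (fun β' => ?_) β
        · simp only [Fin.cons_zero, if_pos rfl]
          exact hyy1
        · simp only [Fin.cons_zero, Fin.cons_succ]
          rw [if_neg (Ne.symm (Fin.succ_ne_zero β'))]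
          exact hyy'0 β'
        · simp only [Fin.cons_zero, Fin.cons_succ]
          rw [if_neg (Fin.succ_ne_zero α'), real_inner_comm]
          exact hyy'0 α'
        · simpa using hyy' α' β'
      · intro α β
        refine Fin.cases ?_ (fun α' => ?_) α <;> refine Fin.cases ?_ (fun β' => ?_) β
        · simp only [Fin.cons_zero]
          exact hxy0
        · simp only [Fin.cons_zero, Fin.cons_succ]
          exact hxy'0 β'
        · simp only [Fin.cons_zero, Fin.cons_succ]
          rw [real_inner_comm]
          exact hyx'0 α'
        · simpa using hxy' α' β'
      · intro Λ v hv
        obtain ⟨hp, hv'⟩ := hproj_mem v hv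
        have hperp : v - ↑(Submodule.orthogonalProjection W v) ∈ Wᗮ :=
          Submodule.sub_starProjection_mem_orthogonal (K := W) v
        have hsplit : T Λ v = T Λ (↑(Submodule.orthogonalProjection W v)) +
            T Λ (v - ↑(Submodule.orthogonalProjection W v)) := by
          rw [← map_add]
          congr 1
          abel
        rw [hsplit, hTW Λ _ hp, hform' Λ _ hv', Fin.sum_univ_succ]
        simp only [Fin.cons_zero, Fin.cons_succ]
        congr 1
        · have h1 : (inner ℝ x (↑(Submodule.orthogonalProjection W v) : EuclideanSpace ℝ (Fin n)) : ℝ)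
              = inner ℝ x v := by
            have h0 : (inner ℝ x (v - ↑(Submodule.orthogonalProjection W v)) : ℝ) = 0 :=
              (Submodule.mem_orthogonal _ _).mp hperp x hxW
            rw [inner_sub_right] at h0
            linarith
          have h2 : (inner ℝ y (↑(Submodule.orthogonalProjection W v) : EuclideanSpace ℝ (Fin n)) : ℝ)
              = inner ℝ y v := by
            have h0 : (inner ℝ y (v - ↑(Submodule.orthogonalProjection W v)) : ℝ) = 0 :=
              (Submodule.mem_orthogonal _ _).mp hperp y hyW
            rw [inner_sub_right] at h0
            linarith
          rw [h1, h2]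
        · refine Finset.sum_congr rfl fun α _ => ?_
          have h1 : (inner ℝ (x' α) (v - ↑(Submodule.orthogonalProjection W v)) : ℝ) = inner ℝ (x' α) v := by
            have h0 : (inner ℝ (x' α) (↑(Submodule.orthogonalProjection W v) : EuclideanSpace ℝ (Fin n)) : ℝ)
                = 0 := (Submodule.mem_orthogonal' _ _).mp (hx'W α) _ hp
            rw [inner_sub_right, h0, sub_zero]
          have h2 : (inner ℝ (y' α) (v - ↑(Submodule.orthogonalProjection W v)) : ℝ) = inner ℝ (y' α) v := by
            have h0 : (inner ℝ (y' α) (↑(Submodule.orthogonalProjection W v) : EuclideanSpace ℝ (Fin n)) : ℝ)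
                = 0 := (Submodule.mem_orthogonal' _ _).mp (hy'W α) _ hp
            rw [inner_sub_right, h0, sub_zero]
          rw [h1, h2]

end BigAux

/-- Simultaneous normal form for pairwise commuting real antisymmetric matrices:
all `L_Λ` are sums of rotation generators in `r` common orthonormal 2-planes, and if
the `L_Λ` are linearly independent then so are the rows of the coefficient matrix,
whence `m ≤ r ≤ ⌊n/2⌋`. -/
theorem commuting_antisymmetric_simultaneous_normal_form
    (n m : ℕ) (L : Fin m → Matrix (Fin n) (Fin n) ℝ)
    (hskew : ∀ Λ, (L Λ)ᵀ = -(L Λ))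
    (hcomm : ∀ Λ Γ, L Λ * L Γ = L Γ * L Λ) :
    ∃ (r : ℕ) (x y : Fin r → (Fin n → ℝ)) (lam : Fin m → Fin r → ℝ),
      2 * r ≤ n ∧
      (∀ p q : Fin r ⊕ Fin r,
        Sum.elim x y p ⬝ᵥ Sum.elim x y q = if p = q then 1 else 0) ∧
      (∀ Λ, L Λ = ∑ α, lam Λ α • (vecMulVec (y α) (x α) - vecMulVec (x α) (y α))) ∧
      (LinearIndependent ℝ L →
        LinearIndependent ℝ lam ∧ m ≤ r ∧ r ≤ n / 2) := by
  classical
  set T : Fin m → (EuclideanSpace ℝ (Fin n) →ₗ[ℝ] EuclideanSpace ℝ (Fin n)) :=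
    fun Λ => Matrix.toEuclideanLin (L Λ) with hT
  have hTapp : ∀ Λ (v : EuclideanSpace ℝ (Fin n)),
      WithLp.equiv 2 (Fin n → ℝ) (T Λ v) = L Λ *ᵥ (WithLp.equiv 2 (Fin n → ℝ) v) :=
    fun Λ v => rfl
  have hdotskew : ∀ Λ (a b : Fin n → ℝ), (L Λ *ᵥ a) ⬝ᵥ b = -(a ⬝ᵥ (L Λ *ᵥ b)) := by
    intro Λ a b
    have h1 : a ⬝ᵥ ((L Λ)ᵀ *ᵥ b) = (L Λ *ᵥ a) ⬝ᵥ b := by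
      rw [Matrix.dotProduct_mulVec, Matrix.vecMul_transpose]
    rw [← h1, hskew Λ, Matrix.neg_mulVec, dotProduct_neg]
  have hskewT : ∀ Λ (u v : EuclideanSpace ℝ (Fin n)),
      (inner ℝ (T Λ u) v : ℝ) = -inner ℝ u (T Λ v) := by
    intro Λ u v
    rw [snf_inner_eq_dot, snf_inner_eq_dot, hTapp, hTapp]
    exact hdotskew Λ _ _
  have hcommT : ∀ Λ Γ (v : EuclideanSpace ℝ (Fin n)), T Λ (T Γ v) = T Γ (T Λ v) := by
    intro Λ Γ v
    apply (WithLp.equiv 2 (Fin n → ℝ)).injective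
    rw [hTapp, hTapp, hTapp, hTapp, Matrix.mulVec_mulVec, Matrix.mulVec_mulVec, hcomm]
  obtain ⟨r, x, y, μ, hr, hxV, hyV, hxx, hyy, hxy, hform⟩ :=
    snf_aux T hskewT hcommT n ⊤
      (by rw [finrank_top]; exact finrank_euclideanSpace_fin)
      (fun Λ v _ => trivial)
  set xv : Fin r → (Fin n → ℝ) := fun α => WithLp.equiv 2 (Fin n → ℝ) (x α) with hxv
  set yv : Fin r → (Fin n → ℝ) := fun α => WithLp.equiv 2 (Fin n → ℝ) (y α) with hyv
  have hmulvec : ∀ Λ (w : Fin n → ℝ), L Λ *ᵥ w = ∑ α, μ Λ α •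
      ((xv α ⬝ᵥ w) • yv α - (yv α ⬝ᵥ w) • xv α) := by
    intro Λ w
    have h0 := hform Λ ((WithLp.equiv 2 (Fin n → ℝ)).symm w) trivial
    simp only [snf_inner_eq_dot, Equiv.apply_symm_apply] at h0
    have h1 := congrArg (WithLp.linearEquiv 2 ℝ (Fin n → ℝ)) h0
    rw [map_sum] at h1
    simp only [_root_.map_smul, map_sub, WithLp.linearEquiv_apply, hTapp, Equiv.apply_symm_apply] at h1
    exact h1
  have hmatrix : ∀ Λ, L Λ = ∑ α, μ Λ α • (vecMulVec (yv α) (xv α) - vecMulVec (xv α) (yv α)) := by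
    intro Λ
    ext i j
    have h2 := congrArg (fun f => f i) (hmulvec Λ (Pi.single j 1))
    simp only [Matrix.mulVec_single, mul_one, Finset.sum_apply, Pi.smul_apply, Pi.sub_apply,
      smul_eq_mul, dotProduct_single, MulOpposite.op_one, one_smul, Matrix.col_apply] at h2
    rw [Matrix.sum_apply]
    simp only [Matrix.smul_apply, Matrix.sub_apply, Matrix.vecMulVec_apply, smul_eq_mul]
    rw [h2]
    exact Finset.sum_congr rfl fun α _ => by ring
  refine ⟨r, xv, yv, μ, hr, ?_, hmatrix, ?_⟩
  · rintro (α | α) (β | β)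
    · simp only [Sum.elim_inl]
      rw [← snf_inner_eq_dot, hxx α β]
      by_cases h : α = β <;> simp [h]
    · simp only [Sum.elim_inl, Sum.elim_inr]
      rw [← snf_inner_eq_dot, hxy α β]
      simp
    · simp only [Sum.elim_inl, Sum.elim_inr]
      rw [← snf_inner_eq_dot, real_inner_comm, hxy β α]
      simp
    · simp only [Sum.elim_inr]
      rw [← snf_inner_eq_dot, hyy α β]
      by_cases h : α = β <;> simp [h]
  · intro hLind
    set B : Fin r → Matrix (Fin n) (Fin n) ℝ := fun α =>
      vecMulVec (yv α) (xv α) - vecMulVec (xv α) (yv α) with hB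
    set φ : (Fin r → ℝ) →ₗ[ℝ] Matrix (Fin n) (Fin n) ℝ :=
      { toFun := fun c => ∑ α, c α • B α
        map_add' := by
          intro a b
          simp [add_smul, Finset.sum_add_distrib]
        map_smul' := by
          intro t a
          simp only [Pi.smul_apply, smul_eq_mul, RingHom.id_apply, Finset.smul_sum, smul_smul] }
      with hφ
    have hLeq : L = φ ∘ μ := by
      funext Λ
      simpa [hφ, hB] using hmatrix Λ
    have hliμ : LinearIndependent ℝ μ := by
      refine LinearIndependent.of_comp φ ?_
      rw [← hLeq]
      exact hLind
    refine ⟨hliμ, ?_, by omega⟩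
    have := hliμ.fintype_card_le_finrank
    simpa using this
end

section
/- There is no topological space O such that ℝ × (ℝ⁴ ∖ {0}) (where ℝ⁴ ∖ {0} carries the subspace topology from Euclidean ℝ⁴) is homeomorphic to O × (ℝ × Circle), where Circle denotes the unit circle {z ∈ ℂ : |z| = 1} with its subspace topology. -/
open Real unitInterval MeasureTheory

noncomputable section

namespace NoTrivAux

local notation "V" => EuclideanSpace ℝ (Fin 4)

/-- arg is continuous on the circle away from -1 -/
lemma continuousAt_circleArg {z : Circle} (hz : (z : ℂ) ≠ -1) :
    ContinuousAt (fun w : Circle => Complex.arg (w : ℂ)) z := by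
  have hmem : (z : ℂ) ∈ Complex.slitPlane := by
    rw [Complex.mem_slitPlane_iff]
    by_contra h
    push_neg at h
    obtain ⟨h1, h2⟩ := h
    have habs : ‖(z : ℂ)‖ = 1 := Circle.norm_coe z
    apply hz
    have : (z : ℂ).re = -1 := by
      have hsq : (z:ℂ).re ^ 2 + (z:ℂ).im ^ 2 = 1 := by
        have h := Circle.normSq_coe z
        rw [Complex.normSq_apply] at h
        nlinarith [h]
      rw [h2] at hsq
      nlinarith
    apply Complex.ext <;> simp [this, h2]
  exact (Complex.continuousAt_arg hmem).comp continuous_subtype_val.continuousAt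

/-- step lemma: a map uniformly close to a liftable map is liftable -/
lemma lift_step {A : Type*} [TopologicalSpace A] {f g : A → Circle} {θ : A → ℝ}
    (hf : Continuous f) (hg : Continuous g)
    (hne : ∀ a, (f a : ℂ) ≠ -(g a : ℂ))
    (hθ : Continuous θ) (hlift : ∀ a, Circle.exp (θ a) = g a) :
    ∃ θ' : A → ℝ, Continuous θ' ∧ ∀ a, Circle.exp (θ' a) = f a := by
  refine ⟨fun a => θ a + Complex.arg ((f a / g a : Circle) : ℂ), ?_, ?_⟩
  · apply hθ.add
    rw [continuous_iff_continuousAt]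
    intro a
    have hd : Continuous (fun a => f a / g a) := hf.div' hg
    apply (continuousAt_circleArg ?_).comp hd.continuousAt
    · rw [Circle.coe_div]
      intro h
      apply hne a
      have hg0 : (g a : ℂ) ≠ 0 := Circle.coe_ne_zero _
      field_simp at h
      linear_combination h
  · intro a
    rw [Circle.exp_add, hlift a, Circle.exp_arg]
    exact mul_div_cancel (g a) (f a)


/-- a continuous function on I whose values lie in 2πℤ is constant -/
lemma twopi_int_const {f : I → ℝ} (hf : Continuous f)
    (h : ∀ t, ∃ n : ℤ, f t = n * (2 * π)) (t : I) : f t = f 0 := by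
  obtain ⟨n, hn⟩ := h t
  obtain ⟨m, hm⟩ := h 0
  rcases lt_trichotomy n m with hlt | heq | hlt
  · exfalso
    have hy : (n : ℝ) * (2 * π) + π ∈ Set.Icc (f t) (f 0) := by
      constructor
      · rw [hn]; nlinarith [pi_pos]
      · rw [hm]
        have : (n : ℝ) + 1 ≤ m := by exact_mod_cast hlt
        nlinarith [pi_pos]
    obtain ⟨s, hs⟩ := intermediate_value_univ t 0 hf hy
    obtain ⟨k, hk⟩ := h s
    rw [hk] at hs
    have : (2 : ℝ) * (k - n) = 1 := by nlinarith [pi_pos]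
    have : (2 : ℤ) * (k - n) = 1 := by exact_mod_cast this
    omega
  · rw [hn, hm, heq]
  · exfalso
    have hy : (m : ℝ) * (2 * π) + π ∈ Set.Icc (f 0) (f t) := by
      constructor
      · rw [hm]; nlinarith [pi_pos]
      · rw [hn]
        have : (m : ℝ) + 1 ≤ n := by exact_mod_cast hlt
        nlinarith [pi_pos]
    obtain ⟨s, hs⟩ := intermediate_value_univ 0 t hf hy
    obtain ⟨k, hk⟩ := h s
    rw [hk] at hs
    have : (2 : ℝ) * (k - m) = 1 := by nlinarith [pi_pos]
    have : (2 : ℤ) * (k - m) = 1 := by exact_mod_cast this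
    omega

/-- scaled points of the unit interval -/
def stp (N : ℕ) (k : ℕ) : I :=
  ⟨min ((k : ℝ) / N) 1, le_min (by positivity) zero_le_one, min_le_right _ _⟩

lemma stp_coe {N k : ℕ} (hN : 0 < N) (hk : k ≤ N) : (stp N k : ℝ) = (k : ℝ) / N := by
  have hNR : (0:ℝ) < N := by exact_mod_cast hN
  have : (k : ℝ) / N ≤ 1 := by
    rw [div_le_one hNR]; exact_mod_cast hk
  exact min_eq_left this

/-- Every continuous map from the unit square to the circle admits a continuous
logarithm. -/
lemma square_lift {F : I × I → Circle} (hF : Continuous F) :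
    ∃ θ : I × I → ℝ, Continuous θ ∧ ∀ q, Circle.exp (θ q) = F q := by
  have hmul : ∀ (s x : I), ((s : ℝ) * (x : ℝ)) ∈ I := fun s x => mul_mem s.2 x.2
  set Φ : I × (I × I) → Circle :=
    fun p => F (⟨_, hmul p.1 p.2.1⟩, ⟨_, hmul p.1 p.2.2⟩) with hΦdef
  have hΦ : Continuous Φ := by
    apply hF.comp
    apply Continuous.prodMk
    · exact Continuous.subtype_mk
        ((continuous_subtype_val.comp continuous_fst).mul
          (continuous_subtype_val.comp (continuous_fst.comp continuous_snd))) _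
    · exact Continuous.subtype_mk
        ((continuous_subtype_val.comp continuous_fst).mul
          (continuous_subtype_val.comp (continuous_snd.comp continuous_snd))) _
  have hucΦ : UniformContinuous Φ := CompactSpace.uniformContinuous_of_continuous hΦ
  obtain ⟨δ, hδpos, hδ⟩ := Metric.uniformContinuous_iff.mp hucΦ 2 two_pos
  obtain ⟨n, hn⟩ := exists_nat_one_div_lt hδpos
  set N := n + 1 with hNdef
  have hN : 0 < N := Nat.succ_pos n
  have hNR : (0:ℝ) < N := by exact_mod_cast hN
  have h1N : 1 / (N:ℝ) < δ := by
    have : ((N : ℕ) : ℝ) = (n : ℝ) + 1 := by push_cast [hNdef]; ring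
    rw [this]; exact hn
  have key : ∀ k : ℕ, k ≤ N →
      ∃ θ : I × I → ℝ, Continuous θ ∧ ∀ q, Circle.exp (θ q) = Φ (stp N k, q) := by
    intro k
    induction k with
    | zero =>
      intro _
      refine ⟨fun _ => Complex.arg ((Φ (stp N 0, 0, 0)) : ℂ), continuous_const, fun q => ?_⟩
      have h0 : Φ (stp N 0, q) = Φ (stp N 0, 0, 0) := by
        show F _ = F _
        have hc : (stp N 0 : ℝ) = 0 := by
          rw [stp_coe hN (Nat.zero_le _)]; simp
        exact congrArg F (Prod.ext (Subtype.ext (by simp [hc])) (Subtype.ext (by simp [hc])))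
      rw [h0, Circle.exp_arg]
    | succ k ih =>
      intro hk1
      obtain ⟨θ, hθ, hlift⟩ := ih (Nat.le_of_succ_le hk1)
      have hslice : ∀ m : ℕ, Continuous (fun q : I × I => Φ (stp N m, q)) :=
        fun m => hΦ.comp (continuous_const.prodMk continuous_id)
      apply lift_step (hslice (k+1)) (hslice k) ?_ hθ hlift
      intro q heq
      have hdd : dist ((stp N (k+1), q) : I × (I × I)) (stp N k, q) < δ := by
        rw [Prod.dist_eq]
        have hq : dist q q = 0 := dist_self q
        have hst : dist (stp N (k+1)) (stp N k) = 1 / (N : ℝ) := by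
          rw [Subtype.dist_eq, Real.dist_eq, stp_coe hN hk1,
            stp_coe hN (Nat.le_of_succ_le hk1)]
          have he : ((k+1 : ℕ) : ℝ)/(N:ℝ) - (k:ℝ)/(N:ℝ) = 1/(N:ℝ) := by push_cast; ring
          rw [he, abs_of_nonneg (by positivity)]
        rw [hq, hst, max_eq_left (by positivity : (0:ℝ) ≤ 1/(N:ℝ))]
        exact h1N
      have h2 : dist (Φ (stp N (k+1), q)) (Φ (stp N k, q)) < 2 := hδ hdd
      change dist ((Φ (stp N (k+1), q) : ℂ)) ((Φ (stp N k, q) : ℂ)) < 2 at h2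
      rw [heq] at h2
      have habs : ‖((Φ (stp N k, q)) : ℂ)‖ = 1 := Circle.norm_coe _
      rw [Complex.dist_eq] at h2
      have hz : ((-2 : ℂ)) * (Φ (stp N k, q) : ℂ)
          = -(Φ (stp N k, q) : ℂ) - (Φ (stp N k, q) : ℂ) := by ring
      rw [← hz, norm_mul, habs, mul_one] at h2
      have : ‖(-2 : ℂ)‖ = 2 := by
        rw [norm_neg]
        norm_num
      rw [this] at h2
      exact lt_irrefl _ h2
  obtain ⟨θ, hθ, hlift⟩ := key N le_rfl
  refine ⟨θ, hθ, fun q => ?_⟩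
  rw [hlift q]
  show F _ = F _
  have hc : (stp N N : ℝ) = 1 := by rw [stp_coe hN le_rfl, div_self (ne_of_gt hNR)]
  exact congrArg F (Prod.ext (Subtype.ext (by simp [hc])) (Subtype.ext (by simp [hc])))

/-- The winding datum of a loop: `a` is the total angle swept by `L`. -/
def WindsTo (L : I → Circle) (a : ℝ) : Prop :=
  ∃ h : I → ℝ, Continuous h ∧ (∀ t, Circle.exp (h t) = L t) ∧ h 1 - h 0 = a

lemma windsTo_congr {L L' : I → Circle} (h : ∀ t, L t = L' t) {a : ℝ}
    (hw : WindsTo L a) : WindsTo L' a := by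
  obtain ⟨g, hg, hl, hd⟩ := hw
  exact ⟨g, hg, fun t => (hl t).trans (h t), hd⟩

lemma windsTo_exists {L : I → Circle} (hL : Continuous L) : ∃ a, WindsTo L a := by
  obtain ⟨θ, hθ, h⟩ := square_lift (F := fun q : I × I => L q.2) (hL.comp continuous_snd)
  refine ⟨_, fun t => θ (0, t), hθ.comp (continuous_const.prodMk continuous_id),
    fun t => h (0, t), rfl⟩

lemma lift_diff_const {h₁ h₂ : I → ℝ} {L : I → Circle} (hc₁ : Continuous h₁)
    (hc₂ : Continuous h₂) (hl₁ : ∀ t, Circle.exp (h₁ t) = L t)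
    (hl₂ : ∀ t, Circle.exp (h₂ t) = L t) (t : I) :
    h₁ t - h₂ t = h₁ 0 - h₂ 0 := by
  apply twopi_int_const (hc₁.sub hc₂)
  intro s
  have : Circle.exp (h₁ s) = Circle.exp (h₂ s) := by rw [hl₁ s, hl₂ s]
  obtain ⟨m, hm⟩ := Circle.exp_eq_exp.mp this
  exact ⟨m, show h₁ s - h₂ s = (m : ℝ) * (2 * π) by rw [hm]; ring⟩

/-- winding is invariant under free homotopies of loops -/
lemma windsTo_eq {F : I × I → Circle} (hF : Continuous F)
    (hloop : ∀ s, F (s, 0) = F (s, 1)) {a b : ℝ}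
    (ha : WindsTo (fun t => F (0, t)) a) (hb : WindsTo (fun t => F (1, t)) b) : a = b := by
  obtain ⟨θ, hθ, hl⟩ := square_lift hF
  obtain ⟨h₀, hc₀, hl₀, hd₀⟩ := ha
  obtain ⟨h₁, hc₁, hl₁, hd₁⟩ := hb
  have hcs : ∀ s : I, Continuous (fun t : I => θ (s, t)) :=
    fun s => hθ.comp (continuous_const.prodMk continuous_id)
  have e0 : θ (0, 1) - θ (0, 0) = a := by
    have := lift_diff_const (L := fun t => F (0, t)) (hcs 0) hc₀
      (fun t => hl (0, t)) hl₀ 1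
    have hd := hd₀
    linarith
  have e1 : θ (1, 1) - θ (1, 0) = b := by
    have := lift_diff_const (L := fun t => F (1, t)) (hcs 1) hc₁
      (fun t => hl (1, t)) hl₁ 1
    linarith
  have hrigid := twopi_int_const
    (f := fun s : I => θ (s, 1) - θ (s, 0))
    (((hθ.comp (continuous_id.prodMk continuous_const))).sub
      (hθ.comp (continuous_id.prodMk continuous_const)))
    ?_ 1
  · have h10 : θ (1, 1) - θ (1, 0) = θ (0, 1) - θ (0, 0) := hrigid
    linarith
  · intro s
    have : Circle.exp (θ (s, 1)) = Circle.exp (θ (s, 0)) := by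
      rw [hl (s, 1), hl (s, 0), hloop s]
    obtain ⟨m, hm⟩ := Circle.exp_eq_exp.mp this
    exact ⟨m, show θ (s, 1) - θ (s, 0) = (m : ℝ) * (2 * π) by rw [hm]; ring⟩

lemma windsTo_const (c : Circle) : WindsTo (fun _ => c) 0 :=
  ⟨fun _ => Complex.arg (c : ℂ), continuous_const, fun _ => Circle.exp_arg c, by ring⟩

/-- the full loop has winding 2π -/
lemma windsTo_fullLoop : WindsTo (fun t : I => Circle.exp (2 * π * t)) (2 * π) := by
  refine ⟨fun t => 2 * π * t, by fun_prop, fun t => rfl, by norm_num⟩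



def stp' (N : ℕ) (k : ℕ) : I :=
  ⟨min ((k : ℝ) / N) 1, le_min (by positivity) zero_le_one, min_le_right _ _⟩

lemma stp'_coe {N k : ℕ} (hN : 0 < N) (hk : k ≤ N) : (stp' N k : ℝ) = (k : ℝ) / N := by
  have hNR : (0:ℝ) < N := by exact_mod_cast hN
  exact min_eq_left (by rw [div_le_one hNR]; exact_mod_cast hk)

/-- hat function -/
def hat (x : ℝ) : ℝ := max 0 (1 - |x|)

lemma hat_continuous : Continuous hat := by unfold hat; fun_prop

lemma hat_nonneg (x : ℝ) : 0 ≤ hat x := le_max_left _ _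

lemma hat_eq_zero {x : ℝ} (h : 1 ≤ |x|) : hat x = 0 := max_eq_left (by linarith)

lemma hat_eq {x : ℝ} (h0 : 0 ≤ x) (h1 : x ≤ 1) : hat x = 1 - x := by
  rw [hat, abs_of_nonneg h0]; exact max_eq_right (by linarith)

lemma hat_eq_neg {x : ℝ} (h0 : -1 ≤ x) (h1 : x ≤ 0) : hat x = 1 + x := by
  rw [hat, abs_of_nonpos h1]; rw [max_eq_right (by linarith)]; ring

/-- Contract (up to two explicit free homotopies) a unit loop away from the origin. -/
lemma approx_loop {u : I → V} (hu : Continuous u)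
    (hnorm : ∀ t, ‖u t‖ = 1) (hloop : u 0 = u 1) :
    ∃ (ℓ : I → V) (z : V), Continuous ℓ ∧ ℓ 0 = u 0 ∧ ℓ 1 = u 1 ∧
      (∀ (s t : I), (1 - (s:ℝ)) • u t + (s:ℝ) • ℓ t ≠ 0) ∧
      (∀ (s t : I), (1 - (s:ℝ)) • ℓ t + (s:ℝ) • z ≠ 0) := by
  have huc : UniformContinuous u := CompactSpace.uniformContinuous_of_continuous hu
  obtain ⟨δ, hδpos, hδ⟩ := Metric.uniformContinuous_iff.mp huc (1/8) (by norm_num)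
  obtain ⟨n, hn⟩ := exists_nat_one_div_lt hδpos
  set N := n + 1 with hNdef
  have hN : 0 < N := Nat.succ_pos n
  have hNR : (0:ℝ) < N := by exact_mod_cast hN
  have h1N : 1 / (N:ℝ) < δ := by
    have : ((N : ℕ) : ℝ) = (n : ℝ) + 1 := by push_cast [hNdef]; ring
    rw [this]; exact hn
  set ℓ : I → V := fun t => ∑ j ∈ Finset.range (N+1), hat ((N:ℝ) * t - j) • u (stp' N j)
    with hℓdef
  have hℓcont : Continuous ℓ := by
    apply continuous_finset_sum
    intro j _
    exact (hat_continuous.comp (by fun_prop)).smul continuous_const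
  -- collapse of the sum
  have hcol : ∀ t : I, ∃ k : ℕ, k < N ∧ ∃ a b : ℝ, 0 ≤ a ∧ 0 ≤ b ∧ a + b = 1 ∧
      ℓ t = a • u (stp' N k) + b • u (stp' N (k+1)) ∧
      |(t:ℝ) - (k:ℝ)/N| ≤ 1/N ∧ |(t:ℝ) - ((k:ℝ)+1)/N| ≤ 1/N := by
    intro t
    set x := (N:ℝ) * t with hxdef
    have hx0 : 0 ≤ x := mul_nonneg (le_of_lt hNR) t.2.1
    have hxN : x ≤ N := by
      calc x ≤ (N:ℝ) * 1 := mul_le_mul_of_nonneg_left t.2.2 (le_of_lt hNR)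
      _ = N := mul_one _
    set k := min (Nat.floor x) (N - 1) with hkdef
    have hkN : k < N := by
      have : k ≤ N - 1 := min_le_right _ _
      omega
    have hk1 : (k:ℝ) ≤ x := by
      calc (k:ℝ) ≤ (Nat.floor x : ℝ) := by exact_mod_cast min_le_left _ _
      _ ≤ x := Nat.floor_le hx0
    have hk2 : x ≤ (k:ℝ) + 1 := by
      rcases le_or_gt (Nat.floor x) (N-1) with hc | hc
      · rw [show k = Nat.floor x from min_eq_left hc]
        exact le_of_lt (Nat.lt_floor_add_one x)
      · have hkeq : k = N - 1 := min_eq_right (le_of_lt hc)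
        have he : ((k:ℝ) + 1) = (N:ℝ) := by
          rw [hkeq]
          have h2 : (N - 1 : ℕ) + 1 = N := Nat.succ_pred_eq_of_pos hN
          exact_mod_cast congrArg (Nat.cast : ℕ → ℝ) h2
        rw [he]; exact hxN
    refine ⟨k, hkN, hat (x - k), hat (x - ((k:ℝ)+1)), hat_nonneg _, hat_nonneg _, ?_, ?_, ?_, ?_⟩
    · rw [hat_eq (by linarith) (by linarith), hat_eq_neg (by linarith) (by linarith)]
      ring
    · -- sum collapse
      have hsub : ({k, k+1} : Finset ℕ) ⊆ Finset.range (N+1) := by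
        intro j hj
        simp only [Finset.mem_insert, Finset.mem_singleton] at hj
        rcases hj with rfl | rfl <;> simp [Finset.mem_range] <;> omega
      have hvanish : ∀ j ∈ Finset.range (N+1), j ∉ ({k, k+1} : Finset ℕ) →
          hat ((N:ℝ) * t - j) • u (stp' N j) = 0 := by
        intro j _ hj
        simp only [Finset.mem_insert, Finset.mem_singleton, not_or] at hj
        obtain ⟨hj1, hj2⟩ := hj
        have : hat (x - j) = 0 := by
          apply hat_eq_zero
          rcases Nat.lt_or_ge j k with hlt | hge
          · have : (j:ℝ) + 1 ≤ k := by exact_mod_cast hlt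
            rw [le_abs]; left; linarith
          · have hgt : k + 1 < j := by omega
            have : (k:ℝ) + 2 ≤ j := by exact_mod_cast hgt
            rw [le_abs]; right; linarith
        rw [← hxdef, this, zero_smul]
      rw [hℓdef]
      simp only []
      rw [← Finset.sum_subset hsub hvanish, Finset.sum_pair (Nat.ne_of_lt (Nat.lt_succ_self k))]
      rw [← hxdef]
      norm_cast
    · have ht : (t:ℝ) = x / N := by rw [hxdef]; field_simp
      rw [abs_le, ht, div_sub_div_same]
      have h1Npos : (0:ℝ) < 1 / N := by positivity
      constructor
      · have h0 : (0:ℝ) ≤ (x - k)/N := div_nonneg (by linarith) (le_of_lt hNR)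
        linarith
      · rw [div_le_div_iff₀ hNR hNR]
        nlinarith
    · have ht : (t:ℝ) = x / N := by rw [hxdef]; field_simp
      rw [abs_le, ht, div_sub_div_same]
      have h1Npos : (0:ℝ) < 1 / N := by positivity
      constructor
      · rw [neg_le, ← neg_div, div_le_div_iff₀ hNR hNR]
        nlinarith
      · have h0 : (x - ((k:ℝ)+1))/N ≤ 0 :=
          div_nonpos_of_nonpos_of_nonneg (by linarith) (le_of_lt hNR)
        linarith
  -- closeness of the interpolant
  have hust : ∀ (j : ℕ) (t : I), j ≤ N → |(t:ℝ) - (j:ℝ)/N| ≤ 1/N → ‖u (stp' N j) - u t‖ ≤ 1/8 := by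
    intro j t hj hdist
    have hd : dist (stp' N j) t < δ := by
      rw [Subtype.dist_eq, Real.dist_eq, stp'_coe hN hj]
      calc |(j:ℝ)/N - t| = |(t:ℝ) - (j:ℝ)/N| := abs_sub_comm _ _
      _ ≤ 1/N := hdist
      _ < δ := h1N
    have := hδ hd
    rw [dist_eq_norm] at this
    exact le_of_lt this
  have hℓu : ∀ t, ‖ℓ t - u t‖ ≤ 1/8 := by
    intro t
    obtain ⟨k, hkN, a, b, ha, hb, hab, heq, hd1, hd2⟩ := hcol t
    have hbval : b = 1 - a := by linarith
    have hsplit : ℓ t - u t = a • (u (stp' N k) - u t) + b • (u (stp' N (k+1)) - u t) := by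
      rw [heq, hbval]
      module
    rw [hsplit]
    have h1 : ‖u (stp' N k) - u t‖ ≤ 1/8 := hust k t (le_of_lt hkN) hd1
    have h2 : ‖u (stp' N (k+1)) - u t‖ ≤ 1/8 := by
      apply hust (k+1) t (by omega)
      have : ((k+1 : ℕ):ℝ) = (k:ℝ) + 1 := by push_cast; ring
      rw [this]
      exact hd2
    calc ‖a • (u (stp' N k) - u t) + b • (u (stp' N (k+1)) - u t)‖
        ≤ ‖a • (u (stp' N k) - u t)‖ + ‖b • (u (stp' N (k+1)) - u t)‖ := norm_add_le _ _
      _ = a * ‖u (stp' N k) - u t‖ + b * ‖u (stp' N (k+1)) - u t‖ := by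
          rw [norm_smul, norm_smul, Real.norm_eq_abs, Real.norm_eq_abs,
            abs_of_nonneg ha, abs_of_nonneg hb]
      _ ≤ a * (1/8) + b * (1/8) := by
          apply add_le_add <;> apply mul_le_mul_of_nonneg_left <;> assumption
      _ = 1/8 := by rw [← add_mul, hab]; ring
  have hℓnorm : ∀ t, (7:ℝ)/8 ≤ ‖ℓ t‖ := by
    intro t
    have h1 := hℓu t
    have h2 := hnorm t
    have h3 := abs_norm_sub_norm_le (ℓ t) (u t)
    rw [abs_le] at h3
    linarith [h3.1]
  -- endpoints
  have hstp0 : stp' N 0 = 0 := by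
    apply Subtype.ext
    rw [stp'_coe hN (Nat.zero_le _)]
    simp
  have hstpN : stp' N N = 1 := by
    apply Subtype.ext
    rw [stp'_coe hN le_rfl, div_self (ne_of_gt hNR)]
    rfl
  have hℓ0 : ℓ 0 = u 0 := by
    rw [hℓdef]
    simp only []
    rw [Finset.sum_eq_single_of_mem 0 (by simp)]
    · have hc : ((0 : I) : ℝ) = 0 := rfl
      rw [hc, hstp0]
      norm_num
      rw [hat_eq le_rfl zero_le_one]
      norm_num
    · intro j _ hj
      have hj1 : (1:ℝ) ≤ |(N:ℝ) * ((0:I):ℝ) - j| := by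
        have hc : ((0 : I) : ℝ) = 0 := rfl
        rw [hc, mul_zero, zero_sub, abs_neg, Nat.abs_cast]
        exact_mod_cast Nat.one_le_iff_ne_zero.mpr hj
      rw [hat_eq_zero hj1, zero_smul]
  have hℓ1 : ℓ 1 = u 1 := by
    rw [hℓdef]
    simp only []
    rw [Finset.sum_eq_single_of_mem N (by simp)]
    · have hc : ((1 : I) : ℝ) = 1 := rfl
      rw [hc, hstpN, mul_one, sub_self, hat_eq le_rfl zero_le_one]
      norm_num
    · intro j hjr hj
      have hjN : j ≤ N := by
        rw [Finset.mem_range] at hjr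
        omega
      have hj1 : (1:ℝ) ≤ |(N:ℝ) * ((1:I):ℝ) - j| := by
        have hc : ((1 : I) : ℝ) = 1 := rfl
        rw [hc, mul_one]
        have : (j:ℝ) + 1 ≤ N := by exact_mod_cast Nat.succ_le_of_lt (lt_of_le_of_ne hjN hj)
        rw [le_abs]; left; linarith
      rw [hat_eq_zero hj1, zero_smul]
  -- spanning planes and the missed direction
  set P : ℕ → Submodule ℝ V := fun k => Submodule.span ℝ {u (stp' N k), u (stp' N (k+1))}
    with hPdef
  have hmem : ∀ t, ∃ k, k < N ∧ ℓ t ∈ P k := by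
    intro t
    obtain ⟨k, hkN, a, b, ha, hb, hab, heq, -, -⟩ := hcol t
    refine ⟨k, hkN, ?_⟩
    rw [heq]
    apply Submodule.add_mem
    · exact Submodule.smul_mem _ _ (Submodule.subset_span (by simp))
    · exact Submodule.smul_mem _ _ (Submodule.subset_span (by simp))
  have hProper : ∀ k, P k ≠ ⊤ := by
    intro k htop
    classical
    have hle : Module.finrank ℝ (P k) ≤ 2 := by
      refine le_trans (finrank_span_le_card _) ?_
      rw [Set.toFinset_insert, Set.toFinset_singleton]
      exact le_trans (Finset.card_insert_le _ _) (by simp)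
    rw [htop, finrank_top] at hle
    rw [finrank_euclideanSpace_fin] at hle
    omega
  have hSm : volume (⋃ k ∈ Set.Iio N, (P k : Set V)) = 0 := by
    rw [measure_biUnion_null_iff (Set.Iio N).to_countable]
    intro k _
    exact Measure.addHaar_submodule _ _ (hProper k)
  have hneuniv : (⋃ k ∈ Set.Iio N, (P k : Set V)) ≠ Set.univ := by
    intro h
    rw [h] at hSm
    exact (isOpen_univ.measure_ne_zero (μ := volume) Set.univ_nonempty) hSm
  obtain ⟨z, hz⟩ := Set.ne_univ_iff_exists_notMem _ |>.mp hneuniv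
  have hzk : ∀ k, k < N → z ∉ P k := by
    intro k hk hmemz
    apply hz
    exact Set.mem_biUnion (by simpa using hk) hmemz
  -- the two homotopies are nonvanishing
  refine ⟨ℓ, z, hℓcont, hℓ0, hℓ1, ?_, ?_⟩
  · intro s t heq
    have h1 : (1 - (s:ℝ)) • u t + (s:ℝ) • ℓ t = u t + (s:ℝ) • (ℓ t - u t) := by module
    rw [h1] at heq
    have hb : ‖(s:ℝ) • (ℓ t - u t)‖ ≤ 1/8 := by
      rw [norm_smul, Real.norm_eq_abs, abs_of_nonneg s.2.1]
      have h2 := hℓu t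
      nlinarith [s.2.2, norm_nonneg (ℓ t - u t)]
    have hneg : u t = -((s:ℝ) • (ℓ t - u t)) := eq_neg_of_add_eq_zero_left heq
    have : ‖u t‖ ≤ 1/8 := by rw [hneg, norm_neg]; exact hb
    rw [hnorm t] at this
    norm_num at this
  · intro s t heq
    rcases eq_or_ne (s:ℝ) 0 with hs | hs
    · rw [hs] at heq
      simp only [sub_zero, one_smul, zero_smul, add_zero] at heq
      have := hℓnorm t
      rw [heq] at this
      norm_num at this
    · obtain ⟨k, hkN, hmemk⟩ := hmem t
      apply hzk k hkN
      have h2 : (s:ℝ) • z = -((1 - (s:ℝ)) • ℓ t) := eq_neg_of_add_eq_zero_right heq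
      have h3 : z = ((s:ℝ)⁻¹ * -(1 - (s:ℝ))) • ℓ t := by
        have := congrArg (fun v => (s:ℝ)⁻¹ • v) h2
        simp only [smul_smul, inv_mul_cancel₀ hs, one_smul] at this
        rw [this]
        rw [smul_neg, smul_smul]
        module
      rw [h3]
      exact Submodule.smul_mem _ _ hmemk

end NoTrivAux

end


universe u

open NoTrivAux Real unitInterval

/-- There is no topological space `O` such that `ℝ × (ℝ⁴ ∖ {0})` is homeomorphic
to `O × (ℝ × U(1))`. -/
theorem no_trivial_product_structure
    (O : Type u) [TopologicalSpace O] :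
    IsEmpty ((ℝ × {x : EuclideanSpace ℝ (Fin 4) // x ≠ 0}) ≃ₜ (O × (ℝ × Circle))) := by
  constructor
  intro e
  have h0I : ((0:I):ℝ) = 0 := rfl
  have h1I : ((1:I):ℝ) = 1 := rfl
  -- base point
  have hv0 : (EuclideanSpace.single (0 : Fin 4) (1:ℝ)) ≠ 0 := by
    intro h
    have h2 := congrArg (fun v => v 0) h
    rw [EuclideanSpace.single_apply] at h2
    simp at h2
  set x₀ : ℝ × {x : EuclideanSpace ℝ (Fin 4) // x ≠ 0} :=
    (0, ⟨EuclideanSpace.single 0 1, hv0⟩) with hx₀def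
  set o : O := (e x₀).1 with hodef
  set p : ℝ × {x : EuclideanSpace ℝ (Fin 4) // x ≠ 0} → Circle :=
    fun x => (e x).2.2 with hpdef
  have hp : Continuous p := e.continuous.snd.snd
  set i : Circle → ℝ × {x : EuclideanSpace ℝ (Fin 4) // x ≠ 0} :=
    fun z => e.symm (o, 0, z) with hidef
  have hi : Continuous i :=
    e.symm.continuous.comp (continuous_const.prodMk (continuous_const.prodMk continuous_id))
  have hpi : ∀ z, p (i z) = z := by
    intro z
    rw [hpdef, hidef]
    simp only [Homeomorph.apply_symm_apply]
  set τ : Circle → ℝ := fun z => (i z).1 with hτdef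
  set ν : Circle → EuclideanSpace ℝ (Fin 4) := fun z => ((i z).2 : EuclideanSpace ℝ (Fin 4)) with hνdef
  have hν : ∀ z, ν z ≠ 0 := fun z => (i z).2.2
  have hτ : Continuous τ := hi.fst
  have hνc : Continuous ν := continuous_subtype_val.comp hi.snd
  set E : I → Circle := fun t => Circle.exp (2 * π * t) with hEdef
  have hE : Continuous E :=
    Circle.exp.continuous.comp (continuous_const.mul continuous_subtype_val)
  have hE01 : E 0 = E 1 := by
    rw [hEdef]
    simp only [h0I, h1I, mul_zero, mul_one]
    rw [Circle.exp_zero, Circle.exp_two_pi]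
  have hνnorm : ∀ w : Circle, ‖ν w‖ ≠ 0 := fun w => norm_ne_zero_iff.mpr (hν w)
  set u : I → EuclideanSpace ℝ (Fin 4) := fun t => ‖ν (E t)‖⁻¹ • ν (E t) with hudef
  have hu : Continuous u := by
    refine Continuous.smul (f := fun t => ‖ν (E t)‖⁻¹) (g := fun t => ν (E t)) ?_ ?_
    · exact ((hνc.comp hE).norm).inv₀ (fun t => hνnorm (E t))
    · exact hνc.comp hE
  have hunorm : ∀ t, ‖u t‖ = 1 := by
    intro t
    rw [hudef]
    simp only []
    rw [norm_smul, Real.norm_eq_abs, abs_of_nonneg (inv_nonneg.mpr (norm_nonneg _)),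
      inv_mul_cancel₀ (hνnorm _)]
  have hu01 : u 0 = u 1 := by rw [hudef]; simp only [hE01]
  obtain ⟨ℓ, z, hℓc, hℓ0, hℓ1, hB, hC⟩ := approx_loop hu hunorm hu01
  have hℓ01 : ℓ 0 = ℓ 1 := by rw [hℓ0, hℓ1, hu01]
  have hz0 : z ≠ 0 := by
    have h := hC 1 0
    rw [h1I] at h
    simpa using h
  -- homotopy A : from the loop i ∘ E to the normalized loop
  have hcoefA : ∀ q : I × I, (0:ℝ) < (1 - (q.1:ℝ)) + (q.1:ℝ) * ‖ν (E q.2)‖⁻¹ := by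
    intro q
    have h1 := q.1.2.1
    have h2 := q.1.2.2
    have hpos : 0 < ‖ν (E q.2)‖⁻¹ :=
      inv_pos.mpr (lt_of_le_of_ne (norm_nonneg _) (Ne.symm (hνnorm _)))
    rcases lt_or_eq_of_le h2 with hlt | heq1
    · exact add_pos_of_pos_of_nonneg (by linarith) (mul_nonneg h1 (le_of_lt hpos))
    · rw [← heq1]
      nlinarith
  have hA : ∀ q : I × I, ((1 - (q.1:ℝ)) + (q.1:ℝ) * ‖ν (E q.2)‖⁻¹) • ν (E q.2) ≠ 0 :=
    fun q => smul_ne_zero (ne_of_gt (hcoefA q)) (hν _)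
  set FA : I × I → Circle := fun q =>
    p ((1 - (q.1:ℝ)) * τ (E q.2),
      ⟨((1 - (q.1:ℝ)) + (q.1:ℝ) * ‖ν (E q.2)‖⁻¹) • ν (E q.2), hA q⟩) with hFAdef
  have hFA : Continuous FA := by
    apply hp.comp
    apply Continuous.prodMk
    · exact (continuous_const.sub (continuous_subtype_val.comp continuous_fst)).mul
        (hτ.comp (hE.comp continuous_snd))
    · apply Continuous.subtype_mk
      exact ((continuous_const.sub (continuous_subtype_val.comp continuous_fst)).add
        ((continuous_subtype_val.comp continuous_fst).mul
          ((hνc.comp (hE.comp continuous_snd)).norm.inv₀ (fun q => hνnorm _)))).smul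
        (hνc.comp (hE.comp continuous_snd))
  have hloopA : ∀ s : I, FA (s, 0) = FA (s, 1) := by
    intro s
    rw [hFAdef]
    apply congrArg p
    apply Prod.ext
    · show (1 - (s:ℝ)) * τ (E 0) = (1 - (s:ℝ)) * τ (E 1)
      rw [hE01]
    · apply Subtype.ext
      show ((1 - (s:ℝ)) + (s:ℝ) * ‖ν (E 0)‖⁻¹) • ν (E 0)
        = ((1 - (s:ℝ)) + (s:ℝ) * ‖ν (E 1)‖⁻¹) • ν (E 1)
      rw [hE01]
  have hFA0 : ∀ t, FA (0, t) = E t := by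
    intro t
    rw [hFAdef]
    have harg : (((1 - (((0:I)):ℝ)) * τ (E t),
        (⟨((1 - (((0:I)):ℝ)) + (((0:I)):ℝ) * ‖ν (E t)‖⁻¹) • ν (E t), hA ((0:I), t)⟩ :
          {x : EuclideanSpace ℝ (Fin 4) // x ≠ 0}))) = i (E t) := by
      apply Prod.ext
      · show (1 - (((0:I)):ℝ)) * τ (E t) = (i (E t)).1
        rw [h0I, hτdef]; ring
      · apply Subtype.ext
        show ((1 - (((0:I)):ℝ)) + (((0:I)):ℝ) * ‖ν (E t)‖⁻¹) • ν (E t) = ((i (E t)).2 : EuclideanSpace ℝ (Fin 4))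
        rw [h0I, hνdef]
        norm_num
    show p _ = E t
    rw [harg, hpi]
  -- homotopy B and C
  set FB : I × I → Circle := fun q =>
    p (0, ⟨(1 - (q.1:ℝ)) • u q.2 + (q.1:ℝ) • ℓ q.2, hB q.1 q.2⟩) with hFBdef
  have hFB : Continuous FB := by
    apply hp.comp
    apply Continuous.prodMk continuous_const
    apply Continuous.subtype_mk
    exact ((continuous_const.sub (continuous_subtype_val.comp continuous_fst)).smul
        (hu.comp continuous_snd)).add
      ((continuous_subtype_val.comp continuous_fst).smul (hℓc.comp continuous_snd))
  have hloopB : ∀ s : I, FB (s, 0) = FB (s, 1) := by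
    intro s
    rw [hFBdef]
    apply congrArg p
    apply Prod.ext
    · rfl
    apply Subtype.ext
    show (1 - (s:ℝ)) • u 0 + (s:ℝ) • ℓ 0 = (1 - (s:ℝ)) • u 1 + (s:ℝ) • ℓ 1
    rw [hu01, hℓ01]
  set FC : I × I → Circle := fun q =>
    p (0, ⟨(1 - (q.1:ℝ)) • ℓ q.2 + (q.1:ℝ) • z, hC q.1 q.2⟩) with hFCdef
  have hFC : Continuous FC := by
    apply hp.comp
    apply Continuous.prodMk continuous_const
    apply Continuous.subtype_mk
    exact ((continuous_const.sub (continuous_subtype_val.comp continuous_fst)).smul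
        (hℓc.comp continuous_snd)).add
      ((continuous_subtype_val.comp continuous_fst).smul continuous_const)
  have hloopC : ∀ s : I, FC (s, 0) = FC (s, 1) := by
    intro s
    rw [hFCdef]
    apply congrArg p
    apply Prod.ext
    · rfl
    apply Subtype.ext
    show (1 - (s:ℝ)) • ℓ 0 + (s:ℝ) • z = (1 - (s:ℝ)) • ℓ 1 + (s:ℝ) • z
    rw [hℓ01]
  -- transitions
  have hAB : ∀ t, FA (1, t) = FB (0, t) := by
    intro t
    rw [hFAdef, hFBdef]
    apply congrArg p
    apply Prod.ext
    · show (1 - (((1:I)):ℝ)) * τ (E t) = (0:ℝ)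
      rw [h1I]; ring
    · apply Subtype.ext
      show ((1 - (((1:I)):ℝ)) + (((1:I)):ℝ) * ‖ν (E t)‖⁻¹) • ν (E t)
        = (1 - (((0:I)):ℝ)) • u t + (((0:I)):ℝ) • ℓ t
      rw [h1I, h0I, hudef]
      norm_num
  have hBC : ∀ t, FB (1, t) = FC (0, t) := by
    intro t
    rw [hFBdef, hFCdef]
    apply congrArg p
    apply Prod.ext
    · rfl
    apply Subtype.ext
    show (1 - (((1:I)):ℝ)) • u t + (((1:I)):ℝ) • ℓ t
      = (1 - (((0:I)):ℝ)) • ℓ t + (((0:I)):ℝ) • z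
    rw [h1I, h0I]
    norm_num
  have hCconst : ∀ t, FC (1, t) = p (0, ⟨z, hz0⟩) := by
    intro t
    rw [hFCdef]
    apply congrArg p
    apply Prod.ext
    · rfl
    apply Subtype.ext
    show (1 - (((1:I)):ℝ)) • ℓ t + (((1:I)):ℝ) • z = z
    rw [h1I]
    norm_num
  -- winding chain
  have wfull : WindsTo (fun t => FA (0, t)) (2 * π) :=
    windsTo_congr (fun t => (hFA0 t).symm) windsTo_fullLoop
  obtain ⟨a1, ha1⟩ := windsTo_exists (hFA.comp (continuous_const.prodMk continuous_id))
  have e1 : 2 * π = a1 := windsTo_eq hFA hloopA wfull ha1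
  have ha1' : WindsTo (fun t => FB (0, t)) a1 := windsTo_congr hAB ha1
  obtain ⟨a2, ha2⟩ := windsTo_exists (hFB.comp (continuous_const.prodMk continuous_id))
  have e2 : a1 = a2 := windsTo_eq hFB hloopB ha1' ha2
  have ha2' : WindsTo (fun t => FC (0, t)) a2 := windsTo_congr hBC ha2
  have e3 : a2 = 0 := windsTo_eq hFC hloopC ha2'
    (windsTo_congr (fun t => (hCconst t).symm) (windsTo_const _))
  have : (2:ℝ) * π = 0 := by rw [e1, e2, e3]
  have hπ := pi_pos
  linarith
end
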